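/- Let 0 < α ≤ 1 and β > 0, and let μ be the gamma distribution with shape α and rate 1/β (density x ↦ x^{α-1} exp(-x/β)/(β^α Γ(α)) on (0, ∞)). Let 0 < δ < 1 and suppose η ≥ β satisfies μ{x : x ≥ η} = δ. Then η ≤ -β (log δ + log Γ(α)). -/

import Mathlib

open MeasureTheory

/-- Corollary 1.2: for gamma-distributed absolute gradients with shape `0 < α ≤ 1` and rate
`1 / β`, if a threshold `η ≥ β` achieves compression ratio `δ` (i.e. `μ {x : x ≥ η} = δ`),
then `η ≤ -β * (log δ + log (Γ α))`. -/
theorem gamma_threshold_upper_bound (α β δ η : ℝ) (hα0 : 0 < α) (hα1 : α ≤ 1)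
    (hβ : 0 < β) (hδ0 : 0 < δ) (hδ1 : δ < 1) (hη : β ≤ η)
    (h : ProbabilityTheory.gammaMeasure α (1 / β) {x : ℝ | η ≤ x} = ENNReal.ofReal δ) :
    η ≤ -β * (Real.log δ + Real.log (Real.Gamma α)) := by
  have hΓ : 0 < Real.Gamma α := Real.Gamma_pos_of_pos hα0
  have hη0 : 0 < η := lt_of_lt_of_le hβ hη
  have hb : (0:ℝ) < 1 / β := by positivity
  set c : ℝ := 1 / (β * Real.Gamma α) with hc
  have hc0 : 0 < c := by positivity
  -- Step 1: rewrite h as a lintegral over Ici η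
  have hset : {x : ℝ | η ≤ x} = Set.Ici η := rfl
  have h1 : (∫⁻ x in Set.Ici η, ProbabilityTheory.gammaPDF α (1/β) x) = ENNReal.ofReal δ := by
    rw [← h, hset, ProbabilityTheory.gammaMeasure,
      withDensity_apply _ measurableSet_Ici]
  -- Step 2: pointwise bound on Ici η
  have hpt : ∀ x ∈ Set.Ici η, ProbabilityTheory.gammaPDF α (1/β) x
      ≤ ENNReal.ofReal (c * Real.exp (-((1/β) * x))) := by
    intro x hx
    have hx0 : (0:ℝ) ≤ x := le_trans hη0.le hx
    rw [ProbabilityTheory.gammaPDF_of_nonneg hx0]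
    apply ENNReal.ofReal_le_ofReal
    have hxpow : x ^ (α - 1) ≤ β ^ (α - 1) :=
      Real.rpow_le_rpow_of_nonpos hβ (le_trans hη hx) (by linarith)
    have key : (1/β : ℝ) ^ α * β ^ (α - 1) = 1 / β := by
      rw [one_div, Real.inv_rpow hβ.le, ← Real.rpow_neg hβ.le, ← Real.rpow_add hβ,
        show -α + (α - 1) = -1 by ring, Real.rpow_neg_one]
    calc (1/β : ℝ) ^ α / Real.Gamma α * x ^ (α - 1) * Real.exp (-((1/β) * x))
        ≤ (1/β : ℝ) ^ α / Real.Gamma α * β ^ (α - 1) * Real.exp (-((1/β) * x)) := by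
          apply mul_le_mul_of_nonneg_right _ (Real.exp_nonneg _)
          exact mul_le_mul_of_nonneg_left hxpow (by positivity)
      _ = c * Real.exp (-((1/β) * x)) := by
          rw [hc, div_mul_eq_mul_div, key]; ring
  -- Step 3: bound the lintegral
  have hmeas : Measurable fun x : ℝ => ENNReal.ofReal (c * Real.exp (-((1/β) * x))) := by
    apply ENNReal.measurable_ofReal.comp
    exact (((measurable_id.const_mul _).neg).exp).const_mul c
  have h2 : ENNReal.ofReal δ
      ≤ ∫⁻ x in Set.Ici η, ENNReal.ofReal (c * Real.exp (-((1/β) * x))) := by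
    rw [← h1]; exact setLIntegral_mono hmeas hpt
  -- Step 4: compute the exponential integral
  have hint : IntegrableOn (fun x : ℝ => c * Real.exp (-((1/β) * x))) (Set.Ici η) := by
    rw [integrableOn_Ici_iff_integrableOn_Ioi]
    simpa [neg_mul, IntegrableOn] using (exp_neg_integrableOn_Ioi η hb).const_mul c
  have h3 : (∫⁻ x in Set.Ici η, ENNReal.ofReal (c * Real.exp (-((1/β) * x))))
      = ENNReal.ofReal (c * (β * Real.exp (-((1/β) * η)))) := by
    rw [← ofReal_integral_eq_lintegral_ofReal hint
      (ae_of_all _ fun x => by positivity)]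
    congr 1
    rw [MeasureTheory.integral_Ici_eq_integral_Ioi, MeasureTheory.integral_const_mul]
    congr 1
    have := MeasureTheory.integral_comp_mul_left_Ioi (fun x => Real.exp (-x)) η hb
    simp only [smul_eq_mul] at this
    rw [this, integral_exp_neg_Ioi, one_div, inv_inv]
  -- Step 5: back to reals
  have h4 : δ ≤ Real.exp (-((1/β) * η)) / Real.Gamma α := by
    have hcb : c * (β * Real.exp (-((1/β) * η))) = Real.exp (-((1/β) * η)) / Real.Gamma α := by
      rw [hc]; field_simp
    rw [h3, hcb] at h2
    exact (ENNReal.ofReal_le_ofReal_iff (by positivity)).mp h2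
  have h5 : Real.log δ ≤ -((1/β) * η) - Real.log (Real.Gamma α) := by
    calc Real.log δ ≤ Real.log (Real.exp (-((1/β) * η)) / Real.Gamma α) :=
          Real.log_le_log hδ0 h4
      _ = -((1/β) * η) - Real.log (Real.Gamma α) := by
          rw [Real.log_div (Real.exp_ne_zero _) hΓ.ne', Real.log_exp]
  have h6 : (1/β) * η ≤ -(Real.log δ + Real.log (Real.Gamma α)) := by linarith
  calc η = β * ((1/β) * η) := by field_simp
    _ ≤ β * -(Real.log δ + Real.log (Real.Gamma α)) :=
        mul_le_mul_of_nonneg_left h6 hβ.le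
    _ = -β * (Real.log δ + Real.log (Real.Gamma α)) := by ring
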